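/- arXiv:1707.03928 — 2 statements merged into one kernel-verified Lean document; each statement's English description precedes it below -/
import Mathlib

section
/- Let n be a positive integer and let A = {a_1 < a_2 < … < a_n} be a set of n distinct positive integers. Then A is a Skolem set (i.e., the set {1, 2, …, 2n} can be partitioned into n pairs (s_i, t_i) with t_i − s_i = a_i) if and only if there exists a fixed-point-free involution π of {1, …, 2n} whose diagonal X-ray d(π) = (d_1, …, d_{4n−1}) satisfies d_k = 1 if k ∈ {2n − a_1, …, 2n − a_n} ∪ {2n + a_1, …, 2n + a_n} and d_k = 0 otherwise. -/
/-- The multiset of all endpoints of the pairs `(s i, t i)`. -/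
def pairsMultiset (n : ℕ) (s t : Fin n → ℕ) : Multiset ℕ :=
  (Finset.univ : Finset (Fin n)).val.bind fun i => {s i, t i}

/-- The pairs `(s i, t i)` form a partition of `{1, 2, …, 2n}`. -/
def IsPartitionOfIcc (n : ℕ) (s t : Fin n → ℕ) : Prop :=
  pairsMultiset n s t = Multiset.map (· + 1) (Multiset.range (2 * n))

lemma count_pairs (n : ℕ) (s t : Fin n → ℕ) (x : ℕ) :
    Multiset.count x (pairsMultiset n s t) =
      ∑ j : Fin n, ((if x = s j then 1 else 0) + (if x = t j then 1 else 0)) := by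
  unfold pairsMultiset
  rw [Multiset.count_bind]
  rw [Finset.sum]
  congr 1
  apply Multiset.map_congr rfl
  intro j _
  simp [Multiset.count_cons, Multiset.count_singleton]
  omega

lemma count_range (n x : ℕ) :
    Multiset.count x (Multiset.map (· + 1) (Multiset.range (2 * n))) =
      if 1 ≤ x ∧ x ≤ 2 * n then 1 else 0 := by
  have hnodup : (Multiset.map (· + 1) (Multiset.range (2 * n))).Nodup :=
    (Multiset.nodup_range _).map (fun a b => by omega)
  by_cases h : 1 ≤ x ∧ x ≤ 2 * n
  · rw [if_pos h, Multiset.count_eq_one_of_mem hnodup]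
    simp only [Multiset.mem_map, Multiset.mem_range]
    exact ⟨x - 1, by omega, by omega⟩
  · rw [if_neg h, Multiset.count_eq_zero_of_notMem]
    simp only [Multiset.mem_map, Multiset.mem_range]
    rintro ⟨y, hy, rfl⟩
    omega

lemma partition_iff (n : ℕ) (s t : Fin n → ℕ) :
    IsPartitionOfIcc n s t ↔ ∀ x : ℕ,
      (∑ j : Fin n, ((if x = s j then 1 else 0) + (if x = t j then 1 else 0))) =
        if 1 ≤ x ∧ x ≤ 2 * n then 1 else 0 := by
  unfold IsPartitionOfIcc
  rw [Multiset.ext]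
  constructor
  · intro h x; rw [← count_pairs, ← count_range]; exact h x
  · intro h x; rw [count_pairs, count_range]; exact h x

lemma sum_ind {n : ℕ} (a : Fin n → ℕ) (hinj : Function.Injective a) (c : ℤ) :
    (∑ j : Fin n, if c = (a j : ℤ) then 1 else 0) =
      if ∃ i, c = (a i : ℤ) then 1 else 0 := by
  by_cases h : ∃ i, c = (a i : ℤ)
  · obtain ⟨i, hi⟩ := h
    rw [if_pos ⟨i, hi⟩, Finset.sum_eq_single i]
    · simp [hi]
    · intro j _ hj
      rw [if_neg]
      intro hc
      apply hj
      apply hinj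
      have : (a j : ℤ) = (a i : ℤ) := by rw [← hc, ← hi]
      exact_mod_cast this
    · simp
  · rw [if_neg h]
    exact Finset.sum_eq_zero fun j _ => if_neg fun hc => h ⟨j, hc⟩

/-- The `k`-th entry (`k = 1, …, 2m-1`) of the diagonal (Toeplitz) X-ray of a
permutation `π` of `{1, …, m}` (encoded 0-based on `Fin m`):
`d_k = #{i : i - π(i) = m - k}`. -/
def diagXray (m : ℕ) (π : Equiv.Perm (Fin m)) (k : ℤ) : ℕ :=
  (Finset.univ.filter fun i : Fin m =>
    ((i : ℕ) : ℤ) - ((π i : ℕ) : ℤ) = (m : ℤ) - k).card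

theorem stmt3 (n : ℕ) (hn : 0 < n) (a : Fin n → ℕ)
    (ha_pos : ∀ i, 0 < a i) (ha_mono : StrictMono a) :
    (∃ s t : Fin n → ℕ, IsPartitionOfIcc n s t ∧ ∀ i, t i = s i + a i) ↔
      ∃ π : Equiv.Perm (Fin (2 * n)), (∀ i, π (π i) = i) ∧ (∀ i, π i ≠ i) ∧
        ∀ k : ℕ, 1 ≤ k → k ≤ 4 * n - 1 →
          diagXray (2 * n) π k =
            if ∃ i, (k : ℤ) = 2 * n - a i ∨ (k : ℤ) = 2 * n + a i then 1 else 0 := by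
  constructor
  · rintro ⟨s, t, hpart, hst⟩
    have hcount := (partition_iff n s t).1 hpart
    -- basic bounds
    have hs_bd : ∀ j, 1 ≤ s j ∧ s j ≤ 2 * n := by
      intro j
      have h := hcount (s j)
      have h1 : (if (s j : ℕ) = s j then (1:ℕ) else 0) + (if (s j : ℕ) = t j then 1 else 0) ≤
          ∑ j' : Fin n, ((if s j = s j' then 1 else 0) + (if s j = t j' then 1 else 0)) :=
        Finset.single_le_sum (f := fun j' => (if s j = s j' then (1:ℕ) else 0) + (if s j = t j' then 1 else 0))
          (fun _ _ => Nat.zero_le _) (Finset.mem_univ j)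
      rw [if_pos rfl] at h1
      by_contra hc
      rw [if_neg (by omega)] at h
      omega
    have ht_bd : ∀ j, 1 ≤ t j ∧ t j ≤ 2 * n := by
      intro j
      have h := hcount (t j)
      have h1 : (if (t j : ℕ) = s j then (1:ℕ) else 0) + (if (t j : ℕ) = t j then 1 else 0) ≤
          ∑ j' : Fin n, ((if t j = s j' then 1 else 0) + (if t j = t j' then 1 else 0)) :=
        Finset.single_le_sum (f := fun j' => (if t j = s j' then (1:ℕ) else 0) + (if t j = t j' then 1 else 0))
          (fun _ _ => Nat.zero_le _) (Finset.mem_univ j)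
      rw [if_pos rfl] at h1
      by_contra hc
      rw [if_neg (by omega)] at h
      omega
    -- uniqueness: two distinct "slots" can't hold the same value
    have huniq : ∀ (x : ℕ) (j j' : Fin n), j ≠ j' →
        ((x = s j ∨ x = t j) → (x = s j' ∨ x = t j') → False) := by
      intro x j j' hne hj hj'
      have hx : 1 ≤ x ∧ x ≤ 2 * n := by
        rcases hj with rfl | rfl
        exacts [hs_bd j, ht_bd j]
      have h := hcount x
      rw [if_pos hx] at h
      have hsub : ({j, j'} : Finset (Fin n)) ⊆ Finset.univ := Finset.subset_univ _
      have h2 : ∑ j'' ∈ ({j, j'} : Finset (Fin n)),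
          ((if x = s j'' then 1 else 0) + (if x = t j'' then 1 else 0)) ≤
          ∑ j'' : Fin n, ((if x = s j'' then 1 else 0) + (if x = t j'' then 1 else 0)) :=
        Finset.sum_le_sum_of_subset hsub
      rw [Finset.sum_pair hne] at h2
      have e1 : (1:ℕ) ≤ (if x = s j then 1 else 0) + (if x = t j then 1 else 0) := by
        rcases hj with rfl | rfl <;> simp
      have e2 : (1:ℕ) ≤ (if x = s j' then 1 else 0) + (if x = t j' then 1 else 0) := by
        rcases hj' with rfl | rfl <;> simp
      omega
    have hst_ne : ∀ j j', s j ≠ t j' := by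
      intro j j' hEq
      by_cases hjj : j = j'
      · subst hjj
        have := hst j
        have := ha_pos j
        omega
      · exact huniq (s j) j j' hjj (Or.inl rfl) (Or.inr hEq)
    have hs_inj : Function.Injective s := by
      intro j j' hEq
      by_contra hne
      exact huniq (s j) j j' hne (Or.inl rfl) (Or.inl hEq)
    have ht_inj : Function.Injective t := by
      intro j j' hEq
      by_contra hne
      exact huniq (t j) j j' hne (Or.inr rfl) (Or.inr hEq)
    -- the bijection
    let g : Fin n ⊕ Fin n → Fin (2 * n) := fun x =>
      match x with
      | .inl j => ⟨s j - 1, by have := hs_bd j; omega⟩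
      | .inr j => ⟨t j - 1, by have := ht_bd j; omega⟩
    have hg_inj : Function.Injective g := by
      rintro (j | j) (j' | j') h <;> simp only [g, Fin.mk.injEq] at h
      · have : s j = s j' := by have := hs_bd j; have := hs_bd j'; omega
        exact congrArg Sum.inl (hs_inj this)
      · exact absurd (by have := hs_bd j; have := ht_bd j'; omega : s j = t j') (hst_ne j j')
      · exact absurd (by have := hs_bd j'; have := ht_bd j; omega : s j' = t j) (hst_ne j' j)
      · have : t j = t j' := by have := ht_bd j; have := ht_bd j'; omega
        exact congrArg Sum.inr (ht_inj this)
    have hg_bij : Function.Bijective g :=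
      (Fintype.bijective_iff_injective_and_card g).2 ⟨hg_inj, by simp; omega⟩
    let e := Equiv.ofBijective g hg_bij
    have hainj : Function.Injective a := ha_mono.injective
    refine ⟨(e.symm.trans (Equiv.sumComm (Fin n) (Fin n))).trans e, ?_, ?_, ?_⟩
    · intro i
      obtain ⟨x, rfl⟩ := e.surjective i
      simp only [Equiv.trans_apply, Equiv.symm_apply_apply]
      cases x <;> rfl
    · intro i hEq
      obtain ⟨x, rfl⟩ := e.surjective i
      simp only [Equiv.trans_apply, Equiv.symm_apply_apply] at hEq
      have := e.injective hEq
      cases x <;> simp [Equiv.sumComm] at this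
    · intro k hk1 hk2
      set π : Equiv.Perm (Fin (2 * n)) := (e.symm.trans (Equiv.sumComm (Fin n) (Fin n))).trans e
        with hπdef
      have hπ1 : ∀ j, π (e (Sum.inl j)) = e (Sum.inr j) := by
        intro j
        simp only [hπdef, Equiv.trans_apply, Equiv.symm_apply_apply]
        rfl
      have hπ2 : ∀ j, π (e (Sum.inr j)) = e (Sum.inl j) := by
        intro j
        simp only [hπdef, Equiv.trans_apply, Equiv.symm_apply_apply]
        rfl
      have hval1 : ∀ j, ((e (Sum.inl j) : Fin (2 * n)) : ℕ) = s j - 1 := fun j => rfl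
      have hval2 : ∀ j, ((e (Sum.inr j) : Fin (2 * n)) : ℕ) = t j - 1 := fun j => rfl
      unfold diagXray
      rw [Finset.card_filter,
        ← Equiv.sum_comp e (fun i : Fin (2 * n) =>
          if ((i : ℕ) : ℤ) - ((π i : ℕ) : ℤ) = ((2 * n : ℕ) : ℤ) - k then 1 else 0),
        Fintype.sum_sum_type]
      have hc1 : ∀ j : Fin n,
          ((((e (Sum.inl j) : Fin (2 * n)) : ℕ) : ℤ) - (((π (e (Sum.inl j)) : Fin (2 * n)) : ℕ) : ℤ)
            = ((2 * n : ℕ) : ℤ) - k) ↔ ((k : ℤ) - 2 * n = (a j : ℤ)) := by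
        intro j
        rw [hπ1 j, hval1 j, hval2 j, Nat.cast_sub (hs_bd j).1, Nat.cast_sub (ht_bd j).1]
        have hstj : (t j : ℤ) = (s j : ℤ) + (a j : ℤ) := by exact_mod_cast congrArg (Nat.cast : ℕ → ℤ) (hst j)
        push_cast
        omega
      have hc2 : ∀ j : Fin n,
          ((((e (Sum.inr j) : Fin (2 * n)) : ℕ) : ℤ) - (((π (e (Sum.inr j)) : Fin (2 * n)) : ℕ) : ℤ)
            = ((2 * n : ℕ) : ℤ) - k) ↔ (((2 * n : ℤ)) - k = (a j : ℤ)) := by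
        intro j
        rw [hπ2 j, hval1 j, hval2 j, Nat.cast_sub (hs_bd j).1, Nat.cast_sub (ht_bd j).1]
        have hstj : (t j : ℤ) = (s j : ℤ) + (a j : ℤ) := by exact_mod_cast congrArg (Nat.cast : ℕ → ℤ) (hst j)
        push_cast
        omega
      rw [Finset.sum_congr rfl (fun j _ => if_congr (hc1 j) rfl rfl),
        Finset.sum_congr rfl (fun j _ => if_congr (hc2 j) rfl rfl),
        sum_ind a hainj ((k : ℤ) - 2 * n), sum_ind a hainj ((2 * n : ℤ) - k)]
      by_cases h1 : ∃ i, (k : ℤ) - 2 * n = (a i : ℤ)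
      · obtain ⟨i, hi⟩ := h1
        rw [if_pos ⟨i, hi⟩, if_neg, if_pos ⟨i, Or.inr (by omega)⟩]
        rintro ⟨i', hi'⟩
        have hp1 : (1 : ℤ) ≤ (a i : ℤ) := by exact_mod_cast ha_pos i
        have hp2 : (1 : ℤ) ≤ (a i' : ℤ) := by exact_mod_cast ha_pos i'
        omega
      · rw [if_neg h1]
        by_cases h2 : ∃ i, ((2 * n : ℤ)) - k = (a i : ℤ)
        · obtain ⟨i, hi⟩ := h2
          rw [if_pos ⟨i, hi⟩, if_pos ⟨i, Or.inl (by omega)⟩]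
        · rw [if_neg h2, if_neg]
          rintro ⟨i, hi | hi⟩
          · exact h2 ⟨i, by omega⟩
          · exact h1 ⟨i, by omega⟩
  · rintro ⟨π, hinv, hfpf, hx⟩
    classical
    have hainj : Function.Injective a := ha_mono.injective
    have hapos : ∀ j, (1 : ℤ) ≤ (a j : ℤ) := fun j => by exact_mod_cast ha_pos j
    set d : Fin (2 * n) → ℤ := fun i => ((i : ℕ) : ℤ) - ((π i : ℕ) : ℤ) with hd
    have hdval : ∀ i, d i = ((i : ℕ) : ℤ) - ((π i : ℕ) : ℤ) := fun i => rfl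
    have hd0 : ∀ i, d i ≠ 0 := by
      intro i h
      rw [hdval] at h
      exact hfpf i (Fin.ext (by omega))
    have hdπ : ∀ i, d (π i) = - d i := by
      intro i
      rw [hdval, hdval, hinv i]
      ring
    have hmain : ∀ i, (∃ j, d i = (a j : ℤ) ∨ d i = -(a j : ℤ)) ∧
        (∀ i', d i' = d i → i' = i) := by
      intro i
      have hlt := i.isLt
      have hlt' := (π i).isLt
      have hne := hd0 i
      have hdi := hdval i
      set k : ℕ := ((2 * n : ℤ) - d i).toNat with hk
      have hkK : (k : ℤ) = (2 * n : ℤ) - d i := Int.toNat_of_nonneg (by omega)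
      have hk1 : 1 ≤ k := by omega
      have hk2 : k ≤ 4 * n - 1 := by omega
      have hcard := hx k hk1 hk2
      have hmemi : i ∈ Finset.univ.filter (fun i' : Fin (2 * n) =>
          ((i' : ℕ) : ℤ) - ((π i' : ℕ) : ℤ) = ((2 * n : ℕ) : ℤ) - k) := by
        simp only [Finset.mem_filter, Finset.mem_univ, true_and]
        push_cast
        omega
      have hpos : 0 < diagXray (2 * n) π k := by
        unfold diagXray
        exact Finset.card_pos.2 ⟨i, hmemi⟩
      rw [hcard] at hpos
      by_cases hcond : ∃ j, (k : ℤ) = 2 * n - (a j : ℤ) ∨ (k : ℤ) = 2 * n + (a j : ℤ)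
      · obtain ⟨j, hj⟩ := hcond
        constructor
        · refine ⟨j, ?_⟩
          rcases hj with hj | hj
          · left; omega
          · right; omega
        · intro i' hii'
          have h1 : diagXray (2 * n) π k = 1 := by rw [hcard, if_pos ⟨j, hj⟩]
          have hmemi' : i' ∈ Finset.univ.filter (fun i'' : Fin (2 * n) =>
              ((i'' : ℕ) : ℤ) - ((π i'' : ℕ) : ℤ) = ((2 * n : ℕ) : ℤ) - k) := by
            simp only [Finset.mem_filter, Finset.mem_univ, true_and]
            have := hdval i'
            push_cast
            omega
          unfold diagXray at h1
          obtain ⟨y, hy⟩ := Finset.card_eq_one.1 h1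
          rw [hy, Finset.mem_singleton] at hmemi hmemi'
          rw [hmemi, hmemi']
      · rw [if_neg hcond] at hpos
        omega
    choose F hF using fun i => (hmain i).1
    have hkey : ∀ i i', d i' = d i → i' = i := fun i i' h => (hmain i).2 i' h
    set H : Fin (2 * n) → Fin n × Bool := fun i => (F i, decide (0 < d i)) with hH
    have hH_inj : Function.Injective H := by
      intro i i' h
      simp only [hH, Prod.mk.injEq] at h
      obtain ⟨hFeq, hbeq⟩ := h
      have hsign : (0 < d i) ↔ (0 < d i') := by rw [← decide_eq_decide]; exact hbeq
      have hp := hapos (F i')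
      have hdd : d i' = d i := by
        rcases hF i with h1 | h1 <;> rcases hF i' with h2 | h2 <;> rw [hFeq] at h1
        · omega
        · exfalso
          have hx1 : 0 < d i := by omega
          have := hsign.1 hx1
          omega
        · exfalso
          have hx2 : 0 < d i' := by omega
          have := hsign.2 hx2
          omega
        · omega
      exact (hkey i i' hdd).symm ▸ rfl
    have hH_bij : Function.Bijective H :=
      (Fintype.bijective_iff_injective_and_card H).2 ⟨hH_inj, by simp [two_mul, mul_comm]⟩
    choose iT hiT using hH_bij.2
    have hdI : ∀ j, d (iT (j, true)) = (a j : ℤ) := by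
      intro j
      have h := hiT (j, true)
      simp only [hH, Prod.mk.injEq] at h
      obtain ⟨h1, h2⟩ := h
      have hposd : 0 < d (iT (j, true)) := of_decide_eq_true h2
      rcases hF (iT (j, true)) with h3 | h3
      · rw [h3, h1]
      · exfalso
        have := hapos (F (iT (j, true)))
        omega
    have hHπ : ∀ j, H (π (iT (j, true))) = (j, false) := by
      intro j
      have hdi := hdI j
      have hdn : d (π (iT (j, true))) = -(a j : ℤ) := by rw [hdπ, hdi]
      have hb : decide (0 < d (π (iT (j, true)))) = false :=
        decide_eq_false (by have := hapos j; omega)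
      have hFπ : F (π (iT (j, true))) = j := by
        rcases hF (π (iT (j, true))) with h3 | h3
        · exfalso
          have := hapos (F (π (iT (j, true))))
          have := hapos j
          omega
        · apply hainj
          have : (a (F (π (iT (j, true)))) : ℤ) = (a j : ℤ) := by omega
          exact_mod_cast this
      simp only [hH]
      rw [hFπ, hb]
    refine ⟨fun j => (π (iT (j, true)) : ℕ) + 1, fun j => ((iT (j, true)) : ℕ) + 1, ?_, ?_⟩
    · rw [partition_iff]
      intro x
      by_cases hx' : 1 ≤ x ∧ x ≤ 2 * n
      · rw [if_pos hx']
        set i0 : Fin (2 * n) := ⟨x - 1, by omega⟩ with hi0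
        have hx0 : (i0 : ℕ) = x - 1 := rfl
        have hx1 : x = (i0 : ℕ) + 1 := by omega
        rcases lt_or_gt_of_ne (hd0 i0) with hneg | hposd
        · -- d i0 < 0 : x is the "s" element of pair j0
          set j0 : Fin n := F (π i0) with hj0
          have hd1 : 0 < d (π i0) := by rw [hdπ]; omega
          have hH1 : H (π i0) = (j0, true) := by simp [hH, hj0, hd1]
          have hiT1 : iT (j0, true) = π i0 := hH_inj (by rw [hiT, hH1])
          have hsx : x = (π (iT (j0, true)) : ℕ) + 1 := by
            rw [hiT1, hinv i0]; exact hx1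
          have hne' : ¬ x = ((iT (j0, true)) : ℕ) + 1 := by
            rw [hiT1]
            intro hEq
            exact hfpf i0 (Fin.ext (by omega))
          have hzero : ∀ b ∈ Finset.univ, b ≠ j0 →
              ((if x = (π (iT (b, true)) : ℕ) + 1 then 1 else 0) +
                (if x = ((iT (b, true)) : ℕ) + 1 then 1 else 0)) = 0 := by
            intro b _ hbne
            have hA : ¬ x = ((iT (b, true)) : ℕ) + 1 := by
              intro hEq
              have h3 : iT (b, true) = i0 := Fin.ext (by omega)
              have h2 := hiT (b, true)
              rw [h3] at h2
              have h5 : decide (0 < d i0) = true := by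
                have := congrArg Prod.snd h2
                simpa [hH] using this
              have := of_decide_eq_true h5
              omega
            have hB : ¬ x = (π (iT (b, true)) : ℕ) + 1 := by
              intro hEq
              have h3 : π (iT (b, true)) = i0 := Fin.ext (by omega)
              have h4 := hHπ b
              rw [h3] at h4
              have hFi0 : F i0 = b := by
                have := congrArg Prod.fst h4
                simpa [hH] using this
              have hdi0 : d i0 = -(a b : ℤ) := by
                rcases hF i0 with h5 | h5 <;> rw [hFi0] at h5
                · exfalso; have := hapos b; omega
                · exact h5
              have hdj0 : d (π i0) = (a j0 : ℤ) := by
                rcases hF (π i0) with h5 | h5 <;> rw [← hj0] at h5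
                · exact h5
                · exfalso
                  have := hapos j0
                  have := hdπ i0
                  have := hapos b
                  omega
              apply hbne
              apply hainj
              have h6 := hdπ i0
              have : (a b : ℤ) = (a j0 : ℤ) := by omega
              exact_mod_cast this
            simp [hA, hB]
          rw [Finset.sum_eq_single_of_mem j0 (Finset.mem_univ j0) hzero,
            if_pos hsx, if_neg hne']
        · -- 0 < d i0 : x is the "t" element of pair j0
          set j0 : Fin n := F i0 with hj0
          have hH1 : H i0 = (j0, true) := by simp [hH, hj0, hposd]
          have hiT1 : iT (j0, true) = i0 := hH_inj (by rw [hiT, hH1])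
          have htx : x = ((iT (j0, true)) : ℕ) + 1 := by rw [hiT1]; exact hx1
          have hne' : ¬ x = (π (iT (j0, true)) : ℕ) + 1 := by
            rw [hiT1]
            intro hEq
            exact hfpf i0 (Fin.ext (by omega))
          have hzero : ∀ b ∈ Finset.univ, b ≠ j0 →
              ((if x = (π (iT (b, true)) : ℕ) + 1 then 1 else 0) +
                (if x = ((iT (b, true)) : ℕ) + 1 then 1 else 0)) = 0 := by
            intro b _ hbne
            have hA : ¬ x = ((iT (b, true)) : ℕ) + 1 := by
              intro hEq
              have h3 : iT (b, true) = i0 := Fin.ext (by omega)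
              have h2 := hiT (b, true)
              rw [h3] at h2
              have := hH1.symm.trans h2
              rw [Prod.mk.injEq] at this
              exact hbne this.1.symm
            have hB : ¬ x = (π (iT (b, true)) : ℕ) + 1 := by
              intro hEq
              have h3 : π (iT (b, true)) = i0 := Fin.ext (by omega)
              have h4 := hHπ b
              rw [h3] at h4
              have := hH1.symm.trans h4
              rw [Prod.mk.injEq] at this
              simp at this
            simp [hA, hB]
          rw [Finset.sum_eq_single_of_mem j0 (Finset.mem_univ j0) hzero,
            if_neg hne', if_pos htx]
      · rw [if_neg hx']
        apply Finset.sum_eq_zero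
        intro j _
        have h1 := (π (iT (j, true))).isLt
        have h2 := (iT (j, true)).isLt
        have hA : ¬ x = (π (iT (j, true)) : ℕ) + 1 := by omega
        have hB : ¬ x = ((iT (j, true)) : ℕ) + 1 := by omega
        simp [hA, hB]
    · intro j
      show ((iT (j, true)) : ℕ) + 1 = (π (iT (j, true)) : ℕ) + 1 + a j
      have h := hdI j
      rw [hdval] at h
      omega
end

section
/- Let n be a positive integer and let A = {a_1, a_2, …, a_n} be a multiset of positive integers. Then A is a multi Skolem set (i.e., the set {1, 2, …, 2n} can be partitioned into n pairs (s_i, t_i) whose differences t_i − s_i form the multiset A) if and only if there exists a fixed-point-free involution π of {1, …, 2n} such that for every positive integer a, the entries d_{2n−a} and d_{2n+a} of the diagonal X-ray d(π) = (d_1, …, d_{4n−1}) both equal the multiplicity of a in A, and d_{2n} = 0. -/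
lemma bind_pair {α : Type*} (s : Multiset α) (f g : α → ℕ) :
    (s.bind fun i => ({f i, g i} : Multiset ℕ)) = s.map f + s.map g := by
  induction s using Multiset.induction with
  | empty => simp
  | cons a s ih =>
      simp [Multiset.cons_bind, ih, Multiset.insert_eq_cons, Multiset.cons_add,
        Multiset.add_cons, Multiset.singleton_add]

lemma count_map_finset {α : Type*} (S : Finset α) (f : α → ℕ) (b : ℕ) :
    Multiset.count b (Multiset.map f S.val) = (S.filter fun i => f i = b).card := by
  classical
  rw [Multiset.count_map, Finset.card_def, Finset.filter_val]
  congr 1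
  exact Multiset.filter_congr fun x _ => eq_comm

lemma card_filter_sum_split {α β γ : Type*} [Fintype α] [Fintype β] [Fintype γ]
    (σ : (α ⊕ β) ≃ γ) (p : γ → Prop) [DecidablePred p] :
    (Finset.univ.filter p).card =
      (Finset.univ.filter fun i : α => p (σ (Sum.inl i))).card +
      (Finset.univ.filter fun i : β => p (σ (Sum.inr i))).card := by
  classical
  rw [← Fintype.card_subtype, ← Fintype.card_subtype, ← Fintype.card_subtype, ← Fintype.card_sum]
  exact Fintype.card_congr ((σ.subtypeEquiv fun x => Iff.rfl).symm.trans Equiv.subtypeSum)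

theorem stmt4 (n : ℕ) (hn : 0 < n) (a : Fin n → ℕ) (ha_pos : ∀ i, 0 < a i) :
    (∃ s t : Fin n → ℕ, IsPartitionOfIcc n s t ∧ (∀ i, s i < t i) ∧
        Multiset.map (fun i => t i - s i) (Finset.univ : Finset (Fin n)).val =
          Multiset.map a (Finset.univ : Finset (Fin n)).val) ↔
      ∃ π : Equiv.Perm (Fin (2 * n)), (∀ i, π (π i) = i) ∧ (∀ i, π i ≠ i) ∧
        (∀ b : ℕ, 0 < b →
          diagXray (2 * n) π ((2 * n : ℤ) - b) =
              Multiset.count b (Multiset.map a (Finset.univ : Finset (Fin n)).val) ∧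
            diagXray (2 * n) π ((2 * n : ℤ) + b) =
              Multiset.count b (Multiset.map a (Finset.univ : Finset (Fin n)).val)) ∧
        diagXray (2 * n) π (2 * n) = 0 := by
  classical
  constructor
  · rintro ⟨s, t, hpart, hst, hdiff⟩
    set g : Fin n ⊕ Fin n → ℕ := Sum.elim s t with hgdef
    have hguniv : Multiset.map g (Finset.univ : Finset (Fin n ⊕ Fin n)).val =
        Multiset.map (· + 1) (Multiset.range (2 * n)) := by
      rw [← Finset.univ_disjSum_univ, Finset.val_disjSum, Multiset.disjSum,
        Multiset.map_add, Multiset.map_map, Multiset.map_map]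
      rw [← hpart, pairsMultiset, bind_pair]
      rfl
    have hmem : ∀ x, 1 ≤ g x ∧ g x ≤ 2 * n := by
      intro x
      have hx : g x ∈ Multiset.map (· + 1) (Multiset.range (2 * n)) := by
        rw [← hguniv]
        exact Multiset.mem_map_of_mem _ (Finset.mem_univ x)
      simp only [Multiset.mem_map, Multiset.mem_range] at hx
      obtain ⟨y, hy, hxy⟩ := hx
      omega
    have hnodup : (Multiset.map g (Finset.univ : Finset (Fin n ⊕ Fin n)).val).Nodup := by
      rw [hguniv]
      exact (Multiset.nodup_range _).map fun x y h => by omega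
    have hginj : Function.Injective g := fun x y hxy =>
      Multiset.inj_on_of_nodup_map hnodup x (Finset.mem_univ x) y (Finset.mem_univ y) hxy
    set G : Fin n ⊕ Fin n → Fin (2 * n) := fun x => ⟨g x - 1, by have := hmem x; omega⟩
      with hGdef
    have hGinj : Function.Injective G := by
      intro x y hxy
      apply hginj
      have h1 := hmem x
      have h2 := hmem y
      have : g x - 1 = g y - 1 := congrArg Fin.val hxy
      omega
    have hGbij : Function.Bijective G := by
      rw [Fintype.bijective_iff_injective_and_card]
      refine ⟨hGinj, by simp [Fintype.card_sum]; ring⟩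
    set σ : (Fin n ⊕ Fin n) ≃ Fin (2 * n) := Equiv.ofBijective G hGbij with hσdef
    set π : Equiv.Perm (Fin (2 * n)) := (σ.symm.trans (Equiv.sumComm _ _)).trans σ with hπdef
    have hπσ : ∀ x, π (σ x) = σ x.swap := by
      intro x
      simp [hπdef, Equiv.sumComm_apply]
    have hσval : ∀ x, ((σ x : Fin (2 * n)) : ℕ) = g x - 1 := fun x => rfl
    have hxray : ∀ k : ℤ, diagXray (2 * n) π k =
        (Finset.univ.filter fun i : Fin n => (s i : ℤ) - t i = 2 * n - k).card +
        (Finset.univ.filter fun i : Fin n => (t i : ℤ) - s i = 2 * n - k).card := by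
      intro k
      rw [diagXray, card_filter_sum_split σ]
      congr 1
      · refine congrArg Finset.card (Finset.filter_congr fun i _ => ?_)
        rw [hπσ]
        have h1 := hmem (Sum.inl i)
        have h2 := hmem (Sum.inr i)
        rw [Sum.swap_inl, hσval, hσval]
        simp only [hgdef, Sum.elim_inl, Sum.elim_inr] at h1 h2 ⊢
        constructor <;> intro h <;> omega
      · refine congrArg Finset.card (Finset.filter_congr fun i _ => ?_)
        rw [hπσ]
        have h1 := hmem (Sum.inl i)
        have h2 := hmem (Sum.inr i)
        rw [Sum.swap_inr, hσval, hσval]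
        simp only [hgdef, Sum.elim_inl, Sum.elim_inr] at h1 h2 ⊢
        constructor <;> intro h <;> omega
    have hcount : ∀ b : ℕ, Multiset.count b
        (Multiset.map a (Finset.univ : Finset (Fin n)).val) =
        (Finset.univ.filter fun i : Fin n => (t i : ℤ) - s i = b).card := by
      intro b
      rw [← hdiff, count_map_finset]
      refine congrArg Finset.card (Finset.filter_congr fun i _ => ?_)
      have := hst i
      constructor <;> intro h <;> omega
    refine ⟨π, ?_, ?_, ?_, ?_⟩
    · intro j
      obtain ⟨x, rfl⟩ := σ.surjective j
      rw [hπσ, hπσ, Sum.swap_swap]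
    · intro j h
      obtain ⟨x, rfl⟩ := σ.surjective j
      rw [hπσ] at h
      have := σ.injective h
      cases x <;> simp at this
    · intro b hb
      constructor
      · rw [hxray, hcount b]
        have h0 : (Finset.univ.filter fun i : Fin n =>
            (s i : ℤ) - t i = 2 * n - (2 * n - b)).card = 0 := by
          rw [Finset.card_eq_zero, Finset.filter_eq_empty_iff]
          intro i _
          have := hst i
          omega
        rw [h0, Nat.zero_add]
        refine congrArg Finset.card (Finset.filter_congr fun i _ => ?_)
        constructor <;> intro h <;> omega
      · rw [hxray, hcount b]
        have h0 : (Finset.univ.filter fun i : Fin n =>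
            (t i : ℤ) - s i = 2 * n - (2 * n + b)).card = 0 := by
          rw [Finset.card_eq_zero, Finset.filter_eq_empty_iff]
          intro i _
          have := hst i
          omega
        rw [h0, Nat.add_zero]
        refine congrArg Finset.card (Finset.filter_congr fun i _ => ?_)
        constructor <;> intro h <;> omega
    · rw [hxray]
      rw [Nat.add_eq_zero]
      constructor <;>
      · rw [Finset.card_eq_zero, Finset.filter_eq_empty_iff]
        intro i _
        have := hst i
        omega
  · rintro ⟨π, hinv, hfpf, hcnt, h0⟩
    set S : Finset (Fin (2 * n)) := Finset.univ.filter (fun x => x < π x) with hSdef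
    have hmemS : ∀ x, x ∈ S ↔ x < π x := by
      intro x; simp [hSdef]
    have hcompl : ∀ x, x ∈ Sᶜ ↔ π x < x := by
      intro x
      simp only [Finset.mem_compl, hmemS, not_lt]
      constructor
      · intro h; exact h.lt_of_ne (hfpf x)
      · intro h; exact h.le
    have himg : S.image π = Sᶜ := by
      ext j
      simp only [Finset.mem_image]
      rw [hcompl]
      constructor
      · rintro ⟨x, hx, rfl⟩
        rw [hinv x]
        exact (hmemS x).mp hx
      · intro h
        exact ⟨π j, (hmemS _).mpr (by rw [hinv j]; exact h), hinv j⟩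
    have hScard : S.card = n := by
      have h1 := Finset.card_add_card_compl S
      have h2 : Sᶜ.card = S.card := by
        rw [← himg, Finset.card_image_of_injective _ π.injective]
      rw [Fintype.card_fin] at h1
      omega
    set E : Fin n → Fin (2 * n) := fun i => ((S.orderIsoOfFin hScard) i : Fin (2 * n))
      with hEdef
    have hEm : ∀ i, E i ∈ S := fun i => (S.orderIsoOfFin hScard i).2
    have hElt : ∀ i, E i < π (E i) := fun i => (hmemS _).mp (hEm i)
    have hEinj : Function.Injective E := fun i j h => by
      have := (S.orderIsoOfFin hScard).injective (Subtype.ext h)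
      exact this
    have hEimg : Finset.image E Finset.univ = S := by
      ext x
      simp only [Finset.mem_image, Finset.mem_univ, true_and]
      constructor
      · rintro ⟨i, rfl⟩; exact hEm i
      · intro hx
        obtain ⟨i, hi⟩ := (S.orderIsoOfFin hScard).surjective ⟨x, hx⟩
        exact ⟨i, congrArg Subtype.val hi⟩
    have hEval : Multiset.map E Finset.univ.val = S.val := by
      rw [← hEimg, Finset.image_val_of_injOn hEinj.injOn]
    have hπval : Multiset.map π S.val = Sᶜ.val := by
      rw [← himg, Finset.image_val_of_injOn π.injective.injOn]
    have hsum : S.val + Sᶜ.val = (Finset.univ : Finset (Fin (2 * n))).val := by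
      have h1 : S.val = Multiset.filter (fun x => x < π x) Finset.univ.val :=
        Finset.filter_val _ _
      have h2 : Sᶜ.val = Multiset.filter (fun x => ¬ x < π x) Finset.univ.val := by
        rw [hSdef, Finset.compl_filter, Finset.filter_val]
      rw [h1, h2, Multiset.filter_add_not]
    have hvalrange : Multiset.map (fun x : Fin (2 * n) => (x : ℕ))
        (Finset.univ : Finset (Fin (2 * n))).val = Multiset.range (2 * n) := by
      have := congrArg Finset.val (Fin.map_valEmbedding_univ (n := 2 * n))
      rw [Finset.map_val] at this
      rw [show (Finset.Iio (2 * n) : Finset ℕ) = Finset.range (2 * n) from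
        Nat.Iio_eq_range _, Finset.range_val] at this
      exact this
    refine ⟨fun i => (E i : ℕ) + 1, fun i => (π (E i) : ℕ) + 1, ?_, ?_, ?_⟩
    · show pairsMultiset n _ _ = _
      rw [pairsMultiset, bind_pair]
      have hl : Multiset.map (fun i => ((E i : Fin (2 * n)) : ℕ) + 1) Finset.univ.val
          = Multiset.map (fun x : Fin (2 * n) => (x : ℕ) + 1) S.val := by
        rw [← hEval, Multiset.map_map]; rfl
      have hr : Multiset.map (fun i => ((π (E i) : Fin (2 * n)) : ℕ) + 1) Finset.univ.val
          = Multiset.map (fun x : Fin (2 * n) => (x : ℕ) + 1) Sᶜ.val := by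
        rw [← hπval, ← hEval, Multiset.map_map, Multiset.map_map]; rfl
      rw [hl, hr, ← Multiset.map_add, hsum]
      rw [← hvalrange, Multiset.map_map]
      rfl
    · intro i
      have := hElt i
      rw [Fin.lt_def] at this
      show (E i : ℕ) + 1 < (π (E i) : ℕ) + 1
      omega
    · have hdm : Multiset.map (fun i => ((π (E i) : ℕ) + 1) - ((E i : ℕ) + 1))
          Finset.univ.val
          = Multiset.map (fun x : Fin (2 * n) => (π x : ℕ) - (x : ℕ)) S.val := by
        rw [← hEval, Multiset.map_map]
        exact Multiset.map_congr rfl fun i _ => by simp [Function.comp]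
      rw [hdm]
      ext b
      rcases Nat.eq_zero_or_pos b with rfl | hb
      · have hl0 : Multiset.count 0
            (Multiset.map (fun x : Fin (2 * n) => (π x : ℕ) - (x : ℕ)) S.val) = 0 := by
          rw [Multiset.count_eq_zero]
          simp only [Multiset.mem_map, not_exists, not_and]
          intro x hx
          have := (hmemS x).mp (Finset.mem_val.mp hx)
          rw [Fin.lt_def] at this
          omega
        have hr0 : Multiset.count 0
            (Multiset.map a (Finset.univ : Finset (Fin n)).val) = 0 := by
          rw [Multiset.count_eq_zero]
          simp only [Multiset.mem_map, not_exists, not_and]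
          intro i _
          have := ha_pos i
          omega
        rw [hl0, hr0]
      · rw [count_map_finset, ← (hcnt b hb).2, diagXray]
        refine congrArg Finset.card ?_
        ext j
        simp only [Finset.mem_filter, hSdef, Finset.mem_univ, true_and, Fin.lt_def]
        constructor
        · rintro ⟨h1, h2⟩
          omega
        · intro h
          omega
end
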